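/- Let n ≥ 4 and let L_n be the line graph on vertices {1, ..., n}, and let a_1, a_2, b_1, b_2 be four distinct vertices. The graph on vertex set {a_1, a_2, b_1, b_2} whose only edges are {a_1, a_2} and {b_1, b_2} (two Bell pairs) is a vertex-minor of L_n if and only if, after possibly swapping a_1 with a_2, swapping b_1 with b_2, and/or swapping the pair {a_1,a_2} with the pair {b_1,b_2}, one has a_1 < a_2 < b_1 < b_2 with a_2 and b_1 not adjacent in L_n (i.e., b_1 > a_2 + 1). -/

import Mathlib

/-- A finite simple graph with an explicit vertex set `verts` inside an ambient type `V`. -/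
structure FGraph (V : Type*) where
  verts : Finset V
  Adj : V → V → Prop
  symm : ∀ x y, Adj x y → Adj y x
  loopless : ∀ x, ¬ Adj x x
  mem_of_adj : ∀ x y, Adj x y → x ∈ verts ∧ y ∈ verts

variable {V : Type*}

/-- Local complementation `τ_a(G)`: toggle every edge between distinct neighbors of `a`. -/
def FGraph.lc (G : FGraph V) (a : V) : FGraph V where
  verts := G.verts
  Adj x y := (G.Adj x y ∧ ¬(x ≠ y ∧ G.Adj a x ∧ G.Adj a y)) ∨
             ((x ≠ y ∧ G.Adj a x ∧ G.Adj a y) ∧ ¬ G.Adj x y)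
  symm := by
    rintro x y (⟨h1, h2⟩ | ⟨⟨hne, hx, hy⟩, h2⟩)
    · exact Or.inl ⟨G.symm _ _ h1, fun h => h2 ⟨h.1.symm, h.2.2, h.2.1⟩⟩
    · exact Or.inr ⟨⟨hne.symm, hy, hx⟩, fun h => h2 (G.symm _ _ h)⟩
  loopless := by
    rintro x (⟨h1, _⟩ | ⟨⟨hne, _, _⟩, _⟩)
    · exact G.loopless x h1
    · exact hne rfl
  mem_of_adj := by
    rintro x y (⟨h1, _⟩ | ⟨⟨hne, hx, hy⟩, _⟩)
    · exact G.mem_of_adj _ _ h1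
    · exact ⟨(G.mem_of_adj _ _ hx).2, (G.mem_of_adj _ _ hy).2⟩

/-- Vertex deletion `G \ v`. -/
def FGraph.delete [DecidableEq V] (G : FGraph V) (v : V) : FGraph V where
  verts := G.verts.erase v
  Adj x y := G.Adj x y ∧ x ≠ v ∧ y ≠ v
  symm := by rintro x y ⟨h, hx, hy⟩; exact ⟨G.symm _ _ h, hy, hx⟩
  loopless := by rintro x ⟨h, _⟩; exact G.loopless x h
  mem_of_adj := by
    rintro x y ⟨h, hx, hy⟩
    exact ⟨Finset.mem_erase.2 ⟨hx, (G.mem_of_adj _ _ h).1⟩,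
           Finset.mem_erase.2 ⟨hy, (G.mem_of_adj _ _ h).2⟩⟩

/-- One step: a local complementation or a vertex deletion. -/
def FGraph.Step [DecidableEq V] (G G' : FGraph V) : Prop :=
  (∃ a, G' = G.lc a) ∨ (∃ v, G' = G.delete v)

/-- `H` is a vertex-minor of `G` (written `H < G`): `H` is obtained from `G` by a finite
sequence of local complementations and vertex deletions. -/
def IsVertexMinor [DecidableEq V] (H G : FGraph V) : Prop :=
  Relation.ReflTransGen FGraph.Step G H

/-- The line graph `L_n` on vertices `{1, ..., n}` with edges `{i, i+1}`. -/
def lineGraph (n : ℕ) : FGraph ℕ where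
  verts := Finset.Icc 1 n
  Adj x y := x ∈ Finset.Icc 1 n ∧ y ∈ Finset.Icc 1 n ∧ (y = x + 1 ∨ x = y + 1)
  symm := by rintro x y ⟨hx, hy, hc⟩; exact ⟨hy, hx, hc.symm⟩
  loopless := by rintro x ⟨_, _, h | h⟩ <;> omega
  mem_of_adj := by rintro x y ⟨hx, hy, _⟩; exact ⟨hx, hy⟩

/-- The ring (cycle) graph `R_n` on vertices `{1, ..., n}`. -/
def ringGraph (n : ℕ) : FGraph ℕ where
  verts := Finset.Icc 1 n
  Adj x y := x ≠ y ∧ x ∈ Finset.Icc 1 n ∧ y ∈ Finset.Icc 1 n ∧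
    (y = x + 1 ∨ x = y + 1 ∨ (x = n ∧ y = 1) ∨ (x = 1 ∧ y = n))
  symm := by rintro x y ⟨hne, hx, hy, hc⟩; exact ⟨hne.symm, hy, hx, by tauto⟩
  loopless := by rintro x ⟨hne, _⟩; exact hne rfl
  mem_of_adj := by rintro x y ⟨_, hx, hy, _⟩; exact ⟨hx, hy⟩

/-- The successor of position `i` along the cycle `1, 2, ..., n, 1`. -/
def cnext (n i : ℕ) : ℕ := if i = n then 1 else i + 1

/-- A Bell pair on `{a1, a2}` together with the isolated vertex `b`. -/
def bell1 {V : Type*} [DecidableEq V] (a1 a2 b : V) : FGraph V where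
  verts := {a1, a2, b}
  Adj x y := x ≠ y ∧ ((x = a1 ∧ y = a2) ∨ (x = a2 ∧ y = a1))
  symm := by rintro x y ⟨hne, hc⟩; exact ⟨hne.symm, by tauto⟩
  loopless := by rintro x ⟨hne, _⟩; exact hne rfl
  mem_of_adj := by
    rintro x y ⟨_, (⟨hx, hy⟩ | ⟨hx, hy⟩)⟩ <;> subst hx <;> subst hy <;>
      simp [Finset.mem_insert]

/-- Two Bell pairs, on `{a1, a2}` and on `{b1, b2}`. -/
def bell2 {V : Type*} [DecidableEq V] (a1 a2 b1 b2 : V) : FGraph V where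
  verts := {a1, a2, b1, b2}
  Adj x y := x ≠ y ∧ ((x = a1 ∧ y = a2) ∨ (x = a2 ∧ y = a1) ∨
                      (x = b1 ∧ y = b2) ∨ (x = b2 ∧ y = b1))
  symm := by rintro x y ⟨hne, hc⟩; exact ⟨hne.symm, by tauto⟩
  loopless := by rintro x ⟨hne, _⟩; exact hne rfl
  mem_of_adj := by
    rintro x y ⟨_, (⟨hx, hy⟩ | ⟨hx, hy⟩ | ⟨hx, hy⟩ | ⟨hx, hy⟩)⟩ <;> subst hx <;> subst hy <;>
      simp [Finset.mem_insert]

section Aux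

open Relation Finset

lemma FGraph.ext' {G H : FGraph V} (h1 : G.verts = H.verts) (h2 : G.Adj = H.Adj) :
    G = H := by
  cases G; cases H; dsimp at h1 h2; subst h1; subst h2; rfl

/-- Connectivity inside an `FGraph`. -/
def FConn (G : FGraph V) (x y : V) : Prop := Relation.ReflTransGen G.Adj x y

lemma FConn.symm' {G : FGraph V} {x y : V} (h : FConn G x y) : FConn G y x := by
  induction h with
  | refl => exact .refl
  | tail _ hbc ih => exact Relation.ReflTransGen.head (G.symm _ _ hbc) ih

lemma lc_adj_a {G : FGraph V} {a u : V} : (G.lc a).Adj a u ↔ G.Adj a u := by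
  constructor
  · rintro (⟨h, _⟩ | ⟨⟨_, h, _⟩, _⟩)
    · exact h
    · exact absurd h (G.loopless a)
  · intro h
    exact Or.inl ⟨h, fun hc => G.loopless a hc.2.1⟩

lemma conn_lc {G : FGraph V} {a x y : V} : FConn (G.lc a) x y ↔ FConn G x y := by
  constructor
  · intro h
    induction h with
    | refl => exact .refl
    | tail _ hbc ih =>
      rcases hbc with ⟨h1, _⟩ | ⟨⟨_, hab, hac⟩, _⟩
      · exact ih.tail h1
      · exact (ih.tail (G.symm _ _ hab)).tail hac
  · intro h
    induction h with
    | refl => exact .refl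
    | tail _ hbc ih =>
      rename_i b c _
      by_cases hC : b ≠ c ∧ G.Adj a b ∧ G.Adj a c
      · exact (ih.tail ((G.lc a).symm _ _ (lc_adj_a.mpr hC.2.1))).tail (lc_adj_a.mpr hC.2.2)
      · exact ih.tail (Or.inl ⟨hbc, hC⟩)

lemma conn_delete [DecidableEq V] {G : FGraph V} {v x y : V}
    (h : FConn (G.delete v) x y) : FConn G x y :=
  Relation.ReflTransGen.lift id (fun _ _ (hab : (G.delete v).Adj _ _) => hab.1) x y h

lemma vm_verts [DecidableEq V] {G H : FGraph V}
    (h : Relation.ReflTransGen FGraph.Step G H) : H.verts ⊆ G.verts := by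
  induction h with
  | refl => exact Finset.Subset.refl _
  | tail _ hstep ih =>
    rcases hstep with ⟨a, rfl⟩ | ⟨w, rfl⟩
    · exact ih
    · exact fun x hx => ih (Finset.mem_of_mem_erase hx)

lemma vm_conn [DecidableEq V] {G H : FGraph V}
    (h : Relation.ReflTransGen FGraph.Step G H) {x y : V} (hc : FConn H x y) :
    FConn G x y := by
  induction h with
  | refl => exact hc
  | tail _ hstep ih =>
    rcases hstep with ⟨a, rfl⟩ | ⟨w, rfl⟩
    · exact ih (conn_lc.mp hc)
    · exact ih (conn_delete hc)

end Aux
section I1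

/-- "Cut-rank at most 1" with respect to a predicate cut `P`. -/
def I1G (G : FGraph V) (P : V → Prop) : Prop :=
  ∀ ⦃x y x' y'⦄, P x → ¬ P y → P x' → ¬ P y' →
    G.Adj x y → G.Adj x' y' → G.Adj x y'

lemma I1G.swap {G : FGraph V} {P : V → Prop} (h : I1G G P) :
    I1G G (fun u => ¬ P u) := by
  intro x y x' y' hx hy hx' hy' hxy hx'y'
  have hy1 : P y := not_not.mp hy
  have hy'1 : P y' := not_not.mp hy'
  exact G.symm _ _ (h hy'1 hx' hy1 hx (G.symm _ _ hx'y') (G.symm _ _ hxy))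

lemma I1G.lc_core {G : FGraph V} {P : V → Prop} (h : I1G G P) {a : V} (hPa : P a) :
    I1G (G.lc a) P := by
  intro x y x' y' hx hy hx' hy' hxy hx'y'
  have hxney : x ≠ y := fun he => hy (he ▸ hx)
  have hxney' : x ≠ y' := fun he => hy' (he ▸ hx)
  have hx'ney' : x' ≠ y' := fun he => hy' (he ▸ hx')
  have haney : a ≠ y := fun he => hy (he ▸ hPa)
  have haney' : a ≠ y' := fun he => hy' (he ▸ hPa)
  -- the five needed rank-1 instances
  have i1 : G.Adj x y → G.Adj x' y' → G.Adj x y' := fun p q => h hx hy hx' hy' p q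
  have i2 : G.Adj x y → G.Adj a y' → G.Adj x y' := fun p q => h hx hy hPa hy' p q
  have i3 : G.Adj x y' → G.Adj a y → G.Adj x y := fun p q => h hx hy' hPa hy p q
  have i4 : G.Adj a y → G.Adj x' y' → G.Adj a y' := fun p q => h hPa hy hx' hy' p q
  have i5 : G.Adj a y' → G.Adj x y → G.Adj a y := fun p q => h hPa hy' hx hy p q
  -- unfold the lc adjacencies
  rcases hxy with ⟨e1, n1⟩ | ⟨⟨_, c1, c2⟩, n1⟩ <;>
    rcases hx'y' with ⟨e2, n2⟩ | ⟨⟨_, c3, c4⟩, n2⟩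
  · by_cases hax : G.Adj a x <;> by_cases hay' : G.Adj a y'
    · exact absurd ⟨hxney, hax, i5 hay' e1⟩ n1
    · exact Or.inl ⟨i1 e1 e2, fun hc => hay' hc.2.2⟩
    · exact Or.inl ⟨i1 e1 e2, fun hc => hax hc.2.1⟩
    · exact Or.inl ⟨i1 e1 e2, fun hc => hax hc.2.1⟩
  · -- e1 : G.Adj x y, second pair toggled on: c3 : Adj a x', c4 : Adj a y', n2 : ¬ Adj x' y'
    exact Or.inl ⟨i2 e1 c4, fun hc => n1 ⟨hxney, hc.2.1, i5 hc.2.2 e1⟩⟩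
  · -- first pair toggled: c1 : Adj a x, c2 : Adj a y, n1 : ¬Adj x y; e2 : Adj x' y'
    have hay' : G.Adj a y' := i4 c2 e2
    by_cases hxy' : G.Adj x y'
    · exact absurd (i3 hxy' c2) n1
    · exact Or.inr ⟨⟨hxney', c1, hay'⟩, hxy'⟩
  · -- both toggled
    by_cases hxy' : G.Adj x y'
    · exact absurd (i3 hxy' c2) n1
    · exact Or.inr ⟨⟨hxney', c1, c4⟩, hxy'⟩

end I1
section I1more

lemma I1G.not_not {G : FGraph V} {P : V → Prop} (h : I1G G (fun u => ¬ ¬ P u)) :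
    I1G G P := by
  intro x y x' y' hx hy hx' hy' hxy hx'y'
  exact h (not_not_intro hx) (fun hc => hc hy) (not_not_intro hx') (fun hc => hc hy') hxy hx'y'

lemma I1G.lc {G : FGraph V} {P : V → Prop} (h : I1G G P) (a : V) :
    I1G (G.lc a) P := by
  by_cases hPa : P a
  · exact h.lc_core hPa
  · exact (h.swap.lc_core hPa).swap.not_not

lemma I1G.delete [DecidableEq V] {G : FGraph V} {P : V → Prop} (h : I1G G P) (v : V) :
    I1G (G.delete v) P := by
  intro x y x' y' hx hy hx' hy' hxy hx'y'
  exact ⟨h hx hy hx' hy' hxy.1 hx'y'.1, hxy.2.1, hx'y'.2.2⟩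

/-- cut-rank ≤ 1 along all initial-segment cuts. -/
def I1 (G : FGraph ℕ) : Prop := ∀ m : ℕ, I1G G (fun u => u ≤ m)

lemma vm_I1 {G H : FGraph ℕ} (h : Relation.ReflTransGen FGraph.Step G H)
    (hG : I1 G) : I1 H := by
  induction h with
  | refl => exact hG
  | tail _ hstep ih =>
    rcases hstep with ⟨a, rfl⟩ | ⟨w, rfl⟩
    · exact fun m => (ih m).lc a
    · exact fun m => (ih m).delete w

lemma I1_line (n : ℕ) : I1 (lineGraph n) := by
  intro m x y x' y' hx hy hx' hy' hxy hx'y'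
  rcases hxy with ⟨h1, h2, h3⟩
  rcases hx'y' with ⟨h1', h2', h3'⟩
  have e1 : y = x + 1 := by simp only [Finset.mem_Icc] at h1 h2; omega
  have e2 : y' = x' + 1 := by simp only [Finset.mem_Icc] at h1' h2'; omega
  exact ⟨h1, h2', by omega⟩

/-- A connected pair straddling a cut yields a crossing edge within the component. -/
lemma walk_cross {G : FGraph ℕ} {m x y : ℕ} (hx : x ≤ m) (h : FConn G x y) :
    m < y → ∃ p q, G.Adj p q ∧ p ≤ m ∧ m < q ∧ FConn G x p := by
  induction h with
  | refl => omega
  | @tail b c hab hbc ih =>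
    intro hy
    by_cases hb : b ≤ m
    · exact ⟨b, c, hbc, hb, hy, hab⟩
    · exact ih (by omega)

end I1more
section Adjacent

lemma through_v {G : FGraph ℕ} {v x y : ℕ} (h : FConn G x y) (hy : y ≠ v) :
    (x ≠ v ∧ FConn (G.delete v) x y) ∨
      ∃ β, β ≠ v ∧ G.Adj v β ∧ FConn (G.delete v) β y := by
  induction h with
  | refl => exact Or.inl ⟨hy, .refl⟩
  | @tail b c hab hbc ih =>
    by_cases hb : b = v
    · exact Or.inr ⟨c, hy, hb ▸ hbc, .refl⟩
    · rcases ih hb with ⟨hx, hconn⟩ | ⟨β, hβ, hvβ, hconn⟩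
      · exact Or.inl ⟨hx, hconn.tail ⟨hbc, hb, hy⟩⟩
      · exact Or.inr ⟨β, hβ, hvβ, hconn.tail ⟨hbc, hb, hy⟩⟩

lemma bell2_reach {a1 a2 b1 b2 : ℕ} (h13 : a1 ≠ b1) (h14 : a1 ≠ b2)
    (h23 : a2 ≠ b1) (h24 : a2 ≠ b2) {u z : ℕ}
    (h : FConn (bell2 a1 a2 b1 b2) u z) (hu : u = a1 ∨ u = a2) :
    z = a1 ∨ z = a2 := by
  induction h with
  | refl => exact hu
  | @tail b c hab hbc ih =>
    rcases hbc with ⟨_, (⟨hb, hc⟩ | ⟨hb, hc⟩ | ⟨hb, hc⟩ | ⟨hb, hc⟩)⟩ <;>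
      rcases ih with h | h <;> subst hb <;> subst hc <;> tauto

lemma bell2_not_conn {a1 a2 b1 b2 : ℕ} (h13 : a1 ≠ b1) (h14 : a1 ≠ b2)
    (h23 : a2 ≠ b1) (h24 : a2 ≠ b2) :
    ¬ FConn (bell2 a1 a2 b1 b2) a2 b1 := by
  intro h
  rcases bell2_reach h13 h14 h23 h24 h (Or.inr rfl) with h | h <;> tauto

lemma bell2_mem_verts {a1 a2 b1 b2 : ℕ} :
    a1 ∈ (bell2 a1 a2 b1 b2).verts ∧ a2 ∈ (bell2 a1 a2 b1 b2).verts ∧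
    b1 ∈ (bell2 a1 a2 b1 b2).verts ∧ b2 ∈ (bell2 a1 a2 b1 b2).verts := by
  refine ⟨?_, ?_, ?_, ?_⟩ <;> simp [bell2]

lemma no_adjacent {c1 c2 e1 e2 : ℕ} (h1 : c1 < c2) (h2 : e1 = c2 + 1) (h3 : e1 < e2) :
    ∀ G : FGraph ℕ, Relation.ReflTransGen FGraph.Step G (bell2 c1 c2 e1 e2) →
      I1 G → FConn G c2 e1 → False := by
  have d13 : c1 ≠ e1 := by omega
  have d14 : c1 ≠ e2 := by omega
  have d23 : c2 ≠ e1 := by omega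
  have d24 : c2 ≠ e2 := by omega
  intro G hchain
  induction hchain using Relation.ReflTransGen.head_induction_on with
  | refl => exact fun _ hconn => bell2_not_conn d13 d14 d23 d24 hconn
  | @head G G' hstep htail ih =>
    intro hI1 hconn
    rcases hstep with ⟨a, rfl⟩ | ⟨v, rfl⟩
    · exact ih (fun m => (hI1 m).lc a) (conn_lc.mpr hconn)
    · by_cases hce : FConn (G.delete v) c2 e1
      · exact ih (fun m => (hI1 m).delete v) hce
      · -- the break analysis
        have hI1' : I1 (G.delete v) := fun m => (hI1 m).delete v
        have hvsub := vm_verts htail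
        obtain ⟨m1, m2, m3, m4⟩ :=
          (bell2_mem_verts (a1 := c1) (a2 := c2) (b1 := e1) (b2 := e2))
        have hc1v : c1 ≠ v := (Finset.mem_erase.mp (hvsub m1)).1
        have hc2v : c2 ≠ v := (Finset.mem_erase.mp (hvsub m2)).1
        have he1v : e1 ≠ v := (Finset.mem_erase.mp (hvsub m3)).1
        have he2v : e2 ≠ v := (Finset.mem_erase.mp (hvsub m4)).1
        have hcc : FConn (G.delete v) c1 c2 :=
          vm_conn htail (Relation.ReflTransGen.single ⟨by omega, Or.inl ⟨rfl, rfl⟩⟩)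
        have hee : FConn (G.delete v) e1 e2 :=
          vm_conn htail
            (Relation.ReflTransGen.single ⟨by omega, Or.inr (Or.inr (Or.inl ⟨rfl, rfl⟩))⟩)
        -- component of c2 lies in [0, c2]
        have intA : ∀ z, FConn (G.delete v) c2 z → z ≤ c2 := by
          intro z hz
          by_contra hgt
          have hz1 : e1 < z := by
            rcases Nat.lt_or_ge e1 z with h | h
            · exact h
            · have : z = e1 := by omega
              exact absurd (this ▸ hz) hce
          obtain ⟨p, q, hpq, hp, hq, hcp⟩ := walk_cross (by omega : c2 ≤ e1) hz hz1
          obtain ⟨p', q', hpq', hp', hq', hep'⟩ := walk_cross (le_refl e1) hee h3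
          have hadj : (G.delete v).Adj p q' := hI1' e1 hp (by omega) hp' (by omega) hpq hpq'
          exact hce ((hcp.tail hadj).trans (FConn.symm' ((hep'.tail hpq'))))
        have intB : ∀ z, FConn (G.delete v) e1 z → e1 ≤ z := by
          intro z hz
          by_contra hlt
          have hz1 : z < c2 := by
            rcases Nat.lt_or_ge z c2 with h | h
            · exact h
            · have : z = c2 := by omega
              exact absurd (this ▸ hz).symm' hce
          set m := max z c1 with hm
          obtain ⟨p, q, hpq, hp, hq, hcp⟩ :=
            walk_cross (le_max_right z c1) hcc (by omega)
          obtain ⟨p', q', hpq', hp', hq', hzp'⟩ :=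
            walk_cross (le_max_left z c1) hz.symm' (by omega)
          have hadj : (G.delete v).Adj p q' := hI1' m hp (by omega) hp' (by omega) hpq hpq'
          exact hce (((hcc.symm'.trans hcp).tail hadj).trans
            (FConn.symm' (hz.trans (hzp'.tail hpq'))))
        -- neighbors of v on both sides
        obtain ⟨β, hβ, hvβ, hβe1⟩ : ∃ β, β ≠ v ∧ G.Adj v β ∧ FConn (G.delete v) β e1 := by
          rcases through_v hconn he1v with ⟨_, h⟩ | h
          · exact absurd h hce
          · exact h
        obtain ⟨α, hα, hvα, hαc2⟩ : ∃ α, α ≠ v ∧ G.Adj v α ∧ FConn (G.delete v) α c2 := by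
          rcases through_v hconn.symm' hc2v with ⟨_, h⟩ | h
          · exact absurd h.symm' hce
          · exact h
        have hαle : α ≤ c2 := intA α hαc2.symm'
        have hβge : e1 ≤ β := intB β hβe1.symm'
        by_cases hv : v ≤ c2
        · -- v on the low side
          have hvlt : v < c2 := by omega
          set m := max v c1 with hm
          obtain ⟨p, q, hpq, hp, hq, hcp⟩ :=
            walk_cross (le_max_right v c1) hcc (by omega)
          have hadj : G.Adj p β :=
            hI1 m hp (by omega) (le_max_left v c1) (by omega) hpq.1 hvβ
          have hadj' : (G.delete v).Adj p β := ⟨hadj, hpq.2.1, hβ⟩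
          exact hce (((hcc.symm'.trans hcp).tail hadj').trans hβe1)
        · -- v on the high side
          have hvgt : e1 < v := by omega
          obtain ⟨p, q, hpq, hp, hq, hep⟩ := walk_cross (le_refl e1) hee h3
          have hadj2 : G.Adj α q :=
            hI1 e1 (by omega) (by omega) hp (by omega) (G.symm _ _ hvα) hpq.1
          have hadj' : (G.delete v).Adj α q := ⟨hadj2, hα, hpq.2.2⟩
          exact hce (((hαc2.symm'.tail hadj').trans (FConn.symm' (hep.tail hpq))))

end Adjacent
section Forward

lemma bell2_perm_a (a1 a2 b1 b2 : ℕ) : bell2 a2 a1 b1 b2 = bell2 a1 a2 b1 b2 := by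
  refine FGraph.ext' ?_ ?_
  · ext x; simp [bell2]; tauto
  · funext x y; apply propext; constructor <;> rintro ⟨h, hc⟩ <;> exact ⟨h, by tauto⟩

lemma bell2_perm_b (a1 a2 b1 b2 : ℕ) : bell2 a1 a2 b2 b1 = bell2 a1 a2 b1 b2 := by
  refine FGraph.ext' ?_ ?_
  · ext x; simp [bell2]; tauto
  · funext x y; apply propext; constructor <;> rintro ⟨h, hc⟩ <;> exact ⟨h, by tauto⟩

lemma bell2_perm_swap (a1 a2 b1 b2 : ℕ) : bell2 b1 b2 a1 a2 = bell2 a1 a2 b1 b2 := by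
  refine FGraph.ext' ?_ ?_
  · ext x; simp [bell2]; tauto
  · funext x y; apply propext; constructor <;> rintro ⟨h, hc⟩ <;> exact ⟨h, by tauto⟩

lemma line_conn_add (n x : ℕ) (hx : 1 ≤ x) :
    ∀ k, x + k ≤ n → FConn (lineGraph n) x (x + k) := by
  intro k
  induction k with
  | zero => exact fun _ => .refl
  | succ k ih =>
    intro h
    exact (ih (by omega)).tail
      ⟨Finset.mem_Icc.mpr ⟨by omega, by omega⟩, Finset.mem_Icc.mpr ⟨by omega, by omega⟩,
        Or.inl rfl⟩

lemma line_conn {n x y : ℕ} (hx1 : 1 ≤ x) (hxn : x ≤ n) (hy1 : 1 ≤ y) (hyn : y ≤ n) :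
    FConn (lineGraph n) x y := by
  rcases le_total x y with h | h
  · have : y = x + (y - x) := by omega
    rw [this]; exact line_conn_add n x hx1 _ (by omega)
  · have : x = y + (x - y) := by omega
    exact FConn.symm' (by rw [this]; exact line_conn_add n y hy1 _ (by omega))

lemma bell2_vm_line_forward (n a1 a2 b1 b2 : ℕ) (hn : 4 ≤ n)
    (ha1 : a1 ∈ Finset.Icc 1 n) (ha2 : a2 ∈ Finset.Icc 1 n)
    (hb1 : b1 ∈ Finset.Icc 1 n) (hb2 : b2 ∈ Finset.Icc 1 n)
    (d1 : a1 ≠ a2) (d2 : a1 ≠ b1) (d3 : a1 ≠ b2)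
    (d4 : a2 ≠ b1) (d5 : a2 ≠ b2) (d6 : b1 ≠ b2)
    (hVM : IsVertexMinor (bell2 a1 a2 b1 b2) (lineGraph n)) :
    ∃ c1 c2 e1 e2 : ℕ,
      ((({c1, c2} : Finset ℕ) = {a1, a2} ∧ ({e1, e2} : Finset ℕ) = {b1, b2}) ∨
       (({c1, c2} : Finset ℕ) = {b1, b2} ∧ ({e1, e2} : Finset ℕ) = {a1, a2})) ∧
      c1 < c2 ∧ c2 + 1 < e1 ∧ e1 < e2 := by
  simp only [Finset.mem_Icc] at ha1 ha2 hb1 hb2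
  obtain ⟨A1, A2, hAlt, hAcase⟩ :
      ∃ u v, u < v ∧ ((u = a1 ∧ v = a2) ∨ (u = a2 ∧ v = a1)) := by
    rcases Nat.lt_or_ge a1 a2 with h | h
    · exact ⟨a1, a2, h, Or.inl ⟨rfl, rfl⟩⟩
    · exact ⟨a2, a1, by omega, Or.inr ⟨rfl, rfl⟩⟩
  obtain ⟨B1, B2, hBlt, hBcase⟩ :
      ∃ u v, u < v ∧ ((u = b1 ∧ v = b2) ∨ (u = b2 ∧ v = b1)) := by
    rcases Nat.lt_or_ge b1 b2 with h | h
    · exact ⟨b1, b2, h, Or.inl ⟨rfl, rfl⟩⟩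
    · exact ⟨b2, b1, by omega, Or.inr ⟨rfl, rfl⟩⟩
  have hbeq : bell2 A1 A2 B1 B2 = bell2 a1 a2 b1 b2 := by
    rcases hAcase with ⟨rfl, rfl⟩ | ⟨rfl, rfl⟩ <;> rcases hBcase with ⟨rfl, rfl⟩ | ⟨rfl, rfl⟩
    · rfl
    · exact bell2_perm_b _ _ _ _
    · exact bell2_perm_a _ _ _ _
    · exact (bell2_perm_a _ _ _ _).trans (bell2_perm_b _ _ _ _)
  have hbeq2 : bell2 B1 B2 A1 A2 = bell2 a1 a2 b1 b2 := by
    exact (bell2_perm_swap A1 A2 B1 B2).trans hbeq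
  have hI1b : I1 (bell2 a1 a2 b1 b2) := vm_I1 hVM (I1_line n)
  have eA : (bell2 a1 a2 b1 b2).Adj A1 A2 := by
    rcases hAcase with ⟨rfl, rfl⟩ | ⟨rfl, rfl⟩
    · exact ⟨by omega, Or.inl ⟨rfl, rfl⟩⟩
    · exact ⟨by omega, Or.inr (Or.inl ⟨rfl, rfl⟩)⟩
  have eB : (bell2 a1 a2 b1 b2).Adj B1 B2 := by
    rcases hBcase with ⟨rfl, rfl⟩ | ⟨rfl, rfl⟩
    · exact ⟨by omega, Or.inr (Or.inr (Or.inl ⟨rfl, rfl⟩))⟩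
    · exact ⟨by omega, Or.inr (Or.inr (Or.inr ⟨rfl, rfl⟩))⟩
  have hsep : A2 < B1 ∨ B2 < A1 := by
    by_contra hcon
    push_neg at hcon
    obtain ⟨hs1, hs2⟩ := hcon
    have hcross := hI1b (max A1 B1) (le_max_left A1 B1)
      (by rcases hAcase with ⟨h,h'⟩|⟨h,h'⟩ <;> rcases hBcase with ⟨g,g'⟩|⟨g,g'⟩ <;> omega)
      (le_max_right A1 B1)
      (by rcases hAcase with ⟨h,h'⟩|⟨h,h'⟩ <;> rcases hBcase with ⟨g,g'⟩|⟨g,g'⟩ <;> omega)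
      eA eB
    rcases hcross with ⟨hne, hc⟩
    rcases hAcase with ⟨h,h'⟩|⟨h,h'⟩ <;> rcases hBcase with ⟨g,g'⟩|⟨g,g'⟩ <;> omega
  have hAset : ({A1, A2} : Finset ℕ) = {a1, a2} := by
    rcases hAcase with ⟨rfl, rfl⟩ | ⟨rfl, rfl⟩
    · rfl
    · ext x; simp; tauto
  have hBset : ({B1, B2} : Finset ℕ) = {b1, b2} := by
    rcases hBcase with ⟨rfl, rfl⟩ | ⟨rfl, rfl⟩
    · rfl
    · ext x; simp; tauto
  rcases hsep with hsep | hsep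
  · refine ⟨A1, A2, B1, B2, Or.inl ⟨hAset, hBset⟩, hAlt, ?_, hBlt⟩
    by_contra hgap
    have hadj : B1 = A2 + 1 := by omega
    refine no_adjacent hAlt hadj hBlt (lineGraph n) (hbeq ▸ hVM) (I1_line n) ?_
    refine line_conn ?_ ?_ ?_ ?_ <;>
      rcases hAcase with ⟨h,h'⟩|⟨h,h'⟩ <;> rcases hBcase with ⟨g,g'⟩|⟨g,g'⟩ <;> omega
  · refine ⟨B1, B2, A1, A2, Or.inr ⟨hBset, hAset⟩, hBlt, ?_, hAlt⟩
    by_contra hgap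
    have hadj : A1 = B2 + 1 := by omega
    refine no_adjacent hBlt hadj hAlt (lineGraph n) (hbeq2 ▸ hVM) (I1_line n) ?_
    refine line_conn ?_ ?_ ?_ ?_ <;>
      rcases hAcase with ⟨h,h'⟩|⟨h,h'⟩ <;> rcases hBcase with ⟨g,g'⟩|⟨g,g'⟩ <;> omega

end Forward
section Backward

/-- Adjacency of a "hook": vertex `p` attached to the path on `[t, q]`. -/
def hkAdj (p t q x y : ℕ) : Prop :=
  (p < t ∧ t ≤ q ∧ ((x = p ∧ y = t) ∨ (x = t ∧ y = p))) ∨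
  (t ≤ x ∧ t ≤ y ∧ x ≤ q ∧ y ≤ q ∧ (y = x + 1 ∨ x = y + 1))

def two (p t q r u s : ℕ) : FGraph ℕ where
  verts := (insert p (Finset.Icc t q)) ∪ (insert r (Finset.Icc u s))
  Adj x y := hkAdj p t q x y ∨ hkAdj r u s x y
  symm := by
    intro x y h
    unfold hkAdj at h ⊢
    rcases h with (⟨h1, h2, h3⟩ | h) | (⟨h1, h2, h3⟩ | h)
    · exact Or.inl (Or.inl ⟨h1, h2, by tauto⟩)
    · exact Or.inl (Or.inr (by omega))
    · exact Or.inr (Or.inl ⟨h1, h2, by tauto⟩)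
    · exact Or.inr (Or.inr (by omega))
  loopless := by intro x h; unfold hkAdj at h; omega
  mem_of_adj := by
    intro x y h
    simp only [Finset.mem_union, Finset.mem_insert, Finset.mem_Icc]
    unfold hkAdj at h
    omega


lemma two_verts (p t q r u s : ℕ) :
    (two p t q r u s).verts = (insert p (Finset.Icc t q)) ∪ (insert r (Finset.Icc u s)) := rfl

lemma two_adj (p t q r u s x y : ℕ) :
    (two p t q r u s).Adj x y ↔ hkAdj p t q x y ∨ hkAdj r u s x y := Iff.rfl

lemma delete_verts {V : Type*} [DecidableEq V] (G : FGraph V) (v : V) :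
    (G.delete v).verts = G.verts.erase v := rfl

lemma delete_adj {V : Type*} [DecidableEq V] (G : FGraph V) (v x y : V) :
    (G.delete v).Adj x y ↔ (G.Adj x y ∧ x ≠ v ∧ y ≠ v) := Iff.rfl

lemma lc_verts {V : Type*} (G : FGraph V) (a : V) : (G.lc a).verts = G.verts := rfl

lemma lc_adj {V : Type*} (G : FGraph V) (a x y : V) :
    (G.lc a).Adj x y ↔ ((G.Adj x y ∧ ¬(x ≠ y ∧ G.Adj a x ∧ G.Adj a y)) ∨
      ((x ≠ y ∧ G.Adj a x ∧ G.Adj a y) ∧ ¬ G.Adj x y)) := Iff.rfl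

lemma lineGraph_verts (n : ℕ) : (lineGraph n).verts = Finset.Icc 1 n := rfl

lemma lineGraph_adj (n x y : ℕ) :
    (lineGraph n).Adj x y ↔
      (x ∈ Finset.Icc 1 n ∧ y ∈ Finset.Icc 1 n ∧ (y = x + 1 ∨ x = y + 1)) := Iff.rfl

lemma bell2_verts' (a1 a2 b1 b2 : ℕ) :
    (bell2 a1 a2 b1 b2).verts = {a1, a2, b1, b2} := rfl

lemma bell2_adj (a1 a2 b1 b2 x y : ℕ) :
    (bell2 a1 a2 b1 b2).Adj x y ↔
      (x ≠ y ∧ ((x = a1 ∧ y = a2) ∨ (x = a2 ∧ y = a1) ∨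
        (x = b1 ∧ y = b2) ∨ (x = b2 ∧ y = b1))) := Iff.rfl

set_option maxHeartbeats 1000000 in
lemma step0 {n c2 : ℕ} (h1 : 2 ≤ c2) (h2 : c2 + 2 ≤ n) :
    (lineGraph n).delete (c2 + 1) = two 1 2 c2 (c2 + 2) (c2 + 3) n := by
  refine FGraph.ext' ?_ ?_
  · ext x
    simp only [lineGraph_verts, two_verts, delete_verts, Finset.ext_iff, Finset.mem_erase, Finset.mem_union,
      Finset.mem_insert, Finset.mem_Icc]
    omega
  · funext x y
    apply propext
    simp only [lineGraph_adj, two_adj, delete_adj, hkAdj, Finset.mem_Icc]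
    omega

set_option maxHeartbeats 1000000 in
lemma step1 {n c2 g : ℕ} (h1 : 2 ≤ c2) (h2 : c2 + 2 ≤ g) (h3 : g + 1 ≤ n) :
    (two 1 2 c2 g (g + 1) n).delete g = two 1 2 c2 (g + 1) (g + 2) n := by
  refine FGraph.ext' ?_ ?_
  · ext x
    simp only [two_verts, delete_verts, Finset.mem_erase, Finset.mem_union,
      Finset.mem_insert, Finset.mem_Icc]
    omega
  · funext x y
    apply propext
    simp only [two_adj, delete_adj, hkAdj, Finset.mem_Icc]
    omega

set_option maxHeartbeats 1000000 in
lemma step2 {n c2 e1 l : ℕ} (h1 : 1 ≤ l) (h2 : l + 1 < c2) (h3 : c2 + 1 < e1)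
    (h4 : e1 ≤ n) :
    (two l (l + 1) c2 e1 (e1 + 1) n).delete l = two (l + 1) (l + 2) c2 e1 (e1 + 1) n := by
  refine FGraph.ext' ?_ ?_
  · ext x
    simp only [two_verts, delete_verts, Finset.mem_erase, Finset.mem_union,
      Finset.mem_insert, Finset.mem_Icc]
    omega
  · funext x y
    apply propext
    simp only [two_adj, delete_adj, hkAdj, Finset.mem_Icc]
    omega

set_option maxHeartbeats 1000000 in
lemma step3 {c1 c2 e1 s : ℕ} (h1 : c1 < c2) (h2 : c2 + 1 < e1) (h3 : e1 ≤ s) :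
    (two c1 (c1 + 1) c2 e1 (e1 + 1) (s + 1)).delete (s + 1) =
      two c1 (c1 + 1) c2 e1 (e1 + 1) s := by
  refine FGraph.ext' ?_ ?_
  · ext x
    simp only [two_verts, delete_verts, Finset.mem_erase, Finset.mem_union,
      Finset.mem_insert, Finset.mem_Icc]
    omega
  · funext x y
    apply propext
    simp only [two_adj, delete_adj, hkAdj, Finset.mem_Icc]
    omega

set_option maxHeartbeats 1000000 in
lemma step4 {c1 c2 e1 u s t : ℕ} (h1 : c1 < t) (h2 : t < c2) (h3 : c2 < e1)
    (h4 : e1 < u) :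
    ((two c1 t c2 e1 u s).lc t).delete t = two c1 (t + 1) c2 e1 u s := by
  refine FGraph.ext' ?_ ?_
  · ext x
    simp only [two_verts, delete_verts, lc_verts, Finset.mem_erase, Finset.mem_union,
      Finset.mem_insert, Finset.mem_Icc]
    omega
  · funext x y
    apply propext
    simp only [two_adj, delete_adj, lc_adj]
    have hnbx : (hkAdj c1 t c2 t x ∨ hkAdj e1 u s t x) ↔ (x = c1 ∨ x = t + 1) := by
      unfold hkAdj; omega
    have hnby : (hkAdj c1 t c2 t y ∨ hkAdj e1 u s t y) ↔ (y = c1 ∨ y = t + 1) := by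
      unfold hkAdj; omega
    rw [hnbx, hnby]
    by_cases hR : hkAdj e1 u s x y
    · have hxy : e1 ≤ x ∧ e1 ≤ y := by unfold hkAdj at hR; omega
      constructor
      · intro _; exact Or.inr hR
      · intro _; exact ⟨Or.inl ⟨Or.inr hR, by omega⟩, by omega, by omega⟩
    · constructor
      · rintro ⟨⟨h, hC⟩ | ⟨hC, h⟩, hx, hy⟩
        · rcases h with h | h
          · left; unfold hkAdj at h ⊢; omega
          · exact absurd h hR
        · left; unfold hkAdj; omega
      · rintro (h | h)
        · have hxt : x ≠ t ∧ y ≠ t := by unfold hkAdj at h; omega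
          by_cases hC : x ≠ y ∧ (x = c1 ∨ x = t + 1) ∧ (y = c1 ∨ y = t + 1)
          · refine ⟨Or.inr ⟨hC, ?_⟩, hxt.1, hxt.2⟩
            rintro (hh | hh)
            · unfold hkAdj at hh; omega
            · exact hR hh
          · refine ⟨Or.inl ⟨Or.inl ?_, hC⟩, hxt.1, hxt.2⟩
            unfold hkAdj at h ⊢; omega
        · exact absurd h hR

set_option maxHeartbeats 1000000 in
lemma step5 {p tp c2 e1 e2 u : ℕ} (h1 : p < tp) (h2 : tp ≤ c2) (h3 : c2 < e1)
    (h4 : e1 < u) (h5 : u < e2) :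
    ((two p tp c2 e1 u e2).lc u).delete u = two p tp c2 e1 (u + 1) e2 := by
  refine FGraph.ext' ?_ ?_
  · ext x
    simp only [two_verts, delete_verts, lc_verts, Finset.mem_erase, Finset.mem_union,
      Finset.mem_insert, Finset.mem_Icc]
    omega
  · funext x y
    apply propext
    simp only [two_adj, delete_adj, lc_adj]
    have hnbx : (hkAdj p tp c2 u x ∨ hkAdj e1 u e2 u x) ↔ (x = e1 ∨ x = u + 1) := by
      unfold hkAdj; omega
    have hnby : (hkAdj p tp c2 u y ∨ hkAdj e1 u e2 u y) ↔ (y = e1 ∨ y = u + 1) := by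
      unfold hkAdj; omega
    rw [hnbx, hnby]
    by_cases hL : hkAdj p tp c2 x y
    · have hxy : x ≤ c2 ∧ y ≤ c2 := by unfold hkAdj at hL; omega
      constructor
      · intro _; exact Or.inl hL
      · intro _; exact ⟨Or.inl ⟨Or.inl hL, by omega⟩, by omega, by omega⟩
    · constructor
      · rintro ⟨⟨h, hC⟩ | ⟨hC, h⟩, hx, hy⟩
        · rcases h with h | h
          · exact absurd h hL
          · right; unfold hkAdj at h ⊢; omega
        · right; unfold hkAdj; omega
      · rintro (h | h)
        · exact absurd h hL
        · have hxt : x ≠ u ∧ y ≠ u := by unfold hkAdj at h; omega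
          by_cases hC : x ≠ y ∧ (x = e1 ∨ x = u + 1) ∧ (y = e1 ∨ y = u + 1)
          · refine ⟨Or.inr ⟨hC, ?_⟩, hxt.1, hxt.2⟩
            rintro (hh | hh)
            · exact hL hh
            · unfold hkAdj at hh; omega
          · refine ⟨Or.inl ⟨Or.inr ?_, hC⟩, hxt.1, hxt.2⟩
            unfold hkAdj at h ⊢; omega
        

set_option maxHeartbeats 1000000 in
lemma two_final {c1 c2 e1 e2 : ℕ} (h1 : c1 < c2) (h2 : c2 + 1 < e1) (h3 : e1 < e2) :
    two c1 c2 c2 e1 e2 e2 = bell2 c1 c2 e1 e2 := by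
  refine FGraph.ext' ?_ ?_
  · ext x
    simp only [two_verts, bell2_verts', Finset.mem_union, Finset.mem_insert, Finset.mem_Icc,
      Finset.mem_singleton]
    omega
  · funext x y
    apply propext
    simp only [two_adj, bell2_adj, hkAdj]
    omega

end Backward
section Chains

lemma chainGap {n c2 e1 : ℕ} (hc2 : 2 ≤ c2) (he1n : e1 + 1 ≤ n) :
    ∀ d g, c2 + 2 ≤ g → g + d = e1 →
      Relation.ReflTransGen FGraph.Step (two 1 2 c2 g (g + 1) n)
        (two 1 2 c2 e1 (e1 + 1) n) := by
  intro d
  induction d with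
  | zero =>
    intro g hg he
    have : g = e1 := by omega
    subst this; exact .refl
  | succ d ih =>
    intro g hg he
    exact Relation.ReflTransGen.head
      (Or.inr ⟨g, (step1 hc2 hg (by omega)).symm⟩) (ih (g + 1) (by omega) (by omega))

lemma chainLow {n c2 e1 c1 : ℕ} (h2 : c1 < c2) (h3 : c2 + 1 < e1) (h4 : e1 ≤ n) :
    ∀ d l, 1 ≤ l → l + d = c1 →
      Relation.ReflTransGen FGraph.Step (two l (l + 1) c2 e1 (e1 + 1) n)
        (two c1 (c1 + 1) c2 e1 (e1 + 1) n) := by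
  intro d
  induction d with
  | zero =>
    intro l hl he
    have : l = c1 := by omega
    subst this; exact .refl
  | succ d ih =>
    intro l hl he
    exact Relation.ReflTransGen.head
      (Or.inr ⟨l, (step2 hl (by omega) h3 h4).symm⟩) (ih (l + 1) (by omega) (by omega))

lemma chainHigh {c1 c2 e1 e2 : ℕ} (h1 : c1 < c2) (h2 : c2 + 1 < e1) (h3 : e1 ≤ e2) :
    ∀ d s, e2 + d = s →
      Relation.ReflTransGen FGraph.Step (two c1 (c1 + 1) c2 e1 (e1 + 1) s)
        (two c1 (c1 + 1) c2 e1 (e1 + 1) e2) := by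
  intro d
  induction d with
  | zero =>
    intro s hs
    have : s = e2 := by omega
    subst this; exact .refl
  | succ d ih =>
    intro s hs
    have hs' : s = (e2 + d) + 1 := by omega
    subst hs'
    exact Relation.ReflTransGen.head
      (Or.inr ⟨e2 + d + 1, (step3 h1 h2 (by omega)).symm⟩) (ih (e2 + d) rfl)

lemma chainLeft {c1 c2 e1 e2 : ℕ} (h2 : c2 + 1 < e1) (h3 : e1 < e2) :
    ∀ d t, c1 < t → t + d = c2 →
      Relation.ReflTransGen FGraph.Step (two c1 t c2 e1 (e1 + 1) e2)
        (two c1 c2 c2 e1 (e1 + 1) e2) := by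
  intro d
  induction d with
  | zero =>
    intro t ht he
    have : t = c2 := by omega
    subst this; exact .refl
  | succ d ih =>
    intro t ht he
    refine Relation.ReflTransGen.head (Or.inl ⟨t, rfl⟩) ?_
    refine Relation.ReflTransGen.head
      (Or.inr ⟨t, (step4 ht (by omega) (by omega) (by omega)).symm⟩) ?_
    exact ih (t + 1) (by omega) (by omega)

lemma chainRight {c1 c2 e1 e2 : ℕ} (h1 : c1 < c2) (h2 : c2 + 1 < e1) :
    ∀ d u, e1 < u → u + d = e2 →
      Relation.ReflTransGen FGraph.Step (two c1 c2 c2 e1 u e2)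
        (two c1 c2 c2 e1 e2 e2) := by
  intro d
  induction d with
  | zero =>
    intro u hu he
    have : u = e2 := by omega
    subst this; exact .refl
  | succ d ih =>
    intro u hu he
    refine Relation.ReflTransGen.head (Or.inl ⟨u, rfl⟩) ?_
    refine Relation.ReflTransGen.head
      (Or.inr ⟨u, (step5 h1 (le_refl c2) (by omega) hu (by omega)).symm⟩) ?_
    exact ih (u + 1) (by omega) (by omega)

lemma backward_chain {n c1 c2 e1 e2 : ℕ} (hc1 : 1 ≤ c1) (h1 : c1 < c2)
    (h2 : c2 + 1 < e1) (h3 : e1 < e2) (h4 : e2 ≤ n) :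
    Relation.ReflTransGen FGraph.Step (lineGraph n) (bell2 c1 c2 e1 e2) := by
  have hc2 : 2 ≤ c2 := by omega
  refine Relation.ReflTransGen.head
    (Or.inr ⟨c2 + 1, (step0 hc2 (by omega)).symm⟩) ?_
  refine Relation.ReflTransGen.trans
    (chainGap (e1 := e1) hc2 (by omega) (e1 - (c2 + 2)) (c2 + 2) (le_refl _) (by omega)) ?_
  refine Relation.ReflTransGen.trans
    (chainLow (c1 := c1) h1 h2 (by omega) (c1 - 1) 1 (le_refl _) (by omega)) ?_
  refine Relation.ReflTransGen.trans
    (chainHigh (e2 := e2) h1 h2 (by omega) (n - e2) n (by omega)) ?_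
  refine Relation.ReflTransGen.trans
    (chainLeft (c1 := c1) (c2 := c2) h2 h3 (c2 - (c1 + 1)) (c1 + 1) (by omega) (by omega)) ?_
  refine Relation.ReflTransGen.trans
    (chainRight (e2 := e2) h1 h2 (e2 - (e1 + 1)) (e1 + 1) (by omega) (by omega)) ?_
  rw [two_final h1 h2 h3]

lemma pair_eq {x y u v : ℕ} (h : ({x, y} : Finset ℕ) = {u, v}) :
    (x = u ∧ y = v) ∨ (x = v ∧ y = u) := by
  have hx : x = u ∨ x = v := by
    have : x ∈ ({u, v} : Finset ℕ) := h ▸ Finset.mem_insert_self x {y}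
    simpa using this
  have hy : y = u ∨ y = v := by
    have : y ∈ ({u, v} : Finset ℕ) := by
      rw [← h]; simp
    simpa using this
  have hu : u = x ∨ u = y := by
    have : u ∈ ({x, y} : Finset ℕ) := by
      rw [h]; simp
    simpa using this
  have hv : v = x ∨ v = y := by
    have : v ∈ ({x, y} : Finset ℕ) := by
      rw [h]; simp
    simpa using this
  omega

end Chains
lemma backward_main {n a1 a2 b1 b2 c1 c2 e1 e2 : ℕ}
    (heq : bell2 c1 c2 e1 e2 = bell2 a1 a2 b1 b2) (hc1 : 1 ≤ c1) (h1 : c1 < c2)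
    (h2 : c2 + 1 < e1) (h3 : e1 < e2) (h4 : e2 ≤ n) :
    IsVertexMinor (bell2 a1 a2 b1 b2) (lineGraph n) :=
  heq ▸ backward_chain hc1 h1 h2 h3 h4
/-- complete solution of the Bell vertex-minor problem on line graphs. -/
theorem bell2_vertexMinor_line_iff (n a1 a2 b1 b2 : ℕ) (hn : 4 ≤ n)
    (ha1 : a1 ∈ Finset.Icc 1 n) (ha2 : a2 ∈ Finset.Icc 1 n)
    (hb1 : b1 ∈ Finset.Icc 1 n) (hb2 : b2 ∈ Finset.Icc 1 n)
    (d1 : a1 ≠ a2) (d2 : a1 ≠ b1) (d3 : a1 ≠ b2)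
    (d4 : a2 ≠ b1) (d5 : a2 ≠ b2) (d6 : b1 ≠ b2) :
    IsVertexMinor (bell2 a1 a2 b1 b2) (lineGraph n) ↔
      ∃ c1 c2 e1 e2 : ℕ,
        ((({c1, c2} : Finset ℕ) = {a1, a2} ∧ ({e1, e2} : Finset ℕ) = {b1, b2}) ∨
         (({c1, c2} : Finset ℕ) = {b1, b2} ∧ ({e1, e2} : Finset ℕ) = {a1, a2})) ∧
        c1 < c2 ∧ c2 + 1 < e1 ∧ e1 < e2 := by
  constructor
  · exact bell2_vm_line_forward n a1 a2 b1 b2 hn ha1 ha2 hb1 hb2 d1 d2 d3 d4 d5 d6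
  · rintro ⟨c1, c2, e1, e2, hcase, hlt1, hgap, hlt2⟩
    simp only [Finset.mem_Icc] at ha1 ha2 hb1 hb2
    rcases hcase with ⟨hA, hB⟩ | ⟨hA, hB⟩
    · rcases pair_eq hA with ⟨h1', h2'⟩ | ⟨h1', h2'⟩ <;>
        rcases pair_eq hB with ⟨h3', h4'⟩ | ⟨h3', h4'⟩ <;>
          subst h1' <;> subst h2' <;> subst h3' <;> subst h4'
      · exact backward_main rfl (by omega) hlt1 hgap hlt2 (by omega)
      · exact backward_main (bell2_perm_b _ _ _ _) (by omega) hlt1 hgap hlt2 (by omega)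
      · exact backward_main (bell2_perm_a _ _ _ _) (by omega) hlt1 hgap hlt2 (by omega)
      · exact backward_main ((bell2_perm_a _ _ _ _).trans (bell2_perm_b _ _ _ _))
          (by omega) hlt1 hgap hlt2 (by omega)
    · rcases pair_eq hA with ⟨h1', h2'⟩ | ⟨h1', h2'⟩ <;>
        rcases pair_eq hB with ⟨h3', h4'⟩ | ⟨h3', h4'⟩ <;>
          subst h1' <;> subst h2' <;> subst h3' <;> subst h4'
      · exact backward_main (bell2_perm_swap _ _ _ _) (by omega) hlt1 hgap hlt2 (by omega)
      · exact backward_main ((bell2_perm_b _ _ _ _).trans (bell2_perm_swap _ _ _ _))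
          (by omega) hlt1 hgap hlt2 (by omega)
      · exact backward_main ((bell2_perm_a _ _ _ _).trans (bell2_perm_swap _ _ _ _))
          (by omega) hlt1 hgap hlt2 (by omega)
      · exact backward_main
          ((bell2_perm_a _ _ _ _).trans ((bell2_perm_b _ _ _ _).trans (bell2_perm_swap _ _ _ _)))
          (by omega) hlt1 hgap hlt2 (by omega)
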